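/- Define h₀(t,u) by the closed form h₀(t,u) = -(1/(2π)) · (1-u²)·sin(t/(2π))·cos(t/(2π)) / (cos²(t/(2π)) + u²·sin²(t/(2π))) + (τ₂(u)/(4π²))·t - (τ₄(u)/(16π⁴))·t³ + (τ₆(u)/(64π⁶))·t⁵ - (τ₈(u)/(256π⁸))·t⁷. Then h₀(t,u) = (i/(4π))·[tanh(ξ + it/(2π)) - tanh(ξ - it/(2π))] - (H₂(u)·t + H₄(u)·t³/3! + H₆(u)·t⁵/5! + H₈(u)·t⁷/7!), where ξ = artanh(u) and H_n(u) = (n-1)!·(i/(2π))ⁿ·τ_n(u). -/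

import Mathlib

open Real Complex

/-- inverse hyperbolic tangent -/
noncomputable def artanhR (u : ℝ) : ℝ := (1 / 2) * Real.log ((1 + u) / (1 - u))

noncomputable def Dop (p : Polynomial ℝ) : Polynomial ℝ :=
  (1 - Polynomial.X ^ 2) * Polynomial.derivative p

noncomputable def tau : ℕ → Polynomial ℝ
  | 0 => 1
  | 1 => Polynomial.X
  | (n + 2) => (((n : ℝ) + 1)⁻¹) • Dop (tau (n + 1))

/-- `H_n(u) = (n-1)!·(i/(2π))ⁿ·τ_n(u)` -/
noncomputable def Hc (n : ℕ) (u : ℝ) : ℂ :=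
  ((n - 1).factorial : ℂ) * (Complex.I / (2 * Real.pi)) ^ n * (((tau n).eval u : ℝ) : ℂ)

/-- the closed form of `h₀(t,u)` -/
noncomputable def h0 (t u : ℝ) : ℝ :=
  -(1 / (2 * Real.pi)) *
      ((1 - u ^ 2) * Real.sin (t / (2 * Real.pi)) * Real.cos (t / (2 * Real.pi))) /
      (Real.cos (t / (2 * Real.pi)) ^ 2 + u ^ 2 * Real.sin (t / (2 * Real.pi)) ^ 2) +
    ((tau 2).eval u / (4 * Real.pi ^ 2)) * t -
    ((tau 4).eval u / (16 * Real.pi ^ 4)) * t ^ 3 +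
    ((tau 6).eval u / (64 * Real.pi ^ 6)) * t ^ 5 -
    ((tau 8).eval u / (256 * Real.pi ^ 8)) * t ^ 7

lemma sinh_artanhR (u : ℝ) (hu : u ∈ Set.Ioo (-1:ℝ) 1) :
    Real.sinh (artanhR u) = u * Real.cosh (artanhR u) := by
  obtain ⟨h1, h2⟩ := hu
  have hA : (0:ℝ) < (1 + u) / (1 - u) := by
    apply div_pos <;> linarith
  have he2 : Real.exp (artanhR u) ^ 2 = (1 + u) / (1 - u) := by
    rw [← Real.exp_nat_mul]
    unfold artanhR
    rw [show (2:ℕ) * ((1/2 : ℝ) * Real.log ((1 + u) / (1 - u))) = Real.log ((1+u)/(1-u)) by push_cast; ring]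
    exact Real.exp_log hA
  have hepos := Real.exp_pos (artanhR u)
  have h1u : (1 - u) ≠ 0 := by linarith
  have key : Real.exp (artanhR u) ^ 2 * (1 - u) = 1 + u := by
    rw [he2]; field_simp
  have hne : Real.exp (artanhR u) ≠ 0 := ne_of_gt hepos
  rw [Real.sinh_eq, Real.cosh_eq, Real.exp_neg]
  field_simp
  linear_combination key

lemma nzC (u a b : ℝ) (h : a ^ 2 + u ^ 2 * b ^ 2 ≠ 0) :
    ((a : ℂ) + (u : ℂ) * (b : ℂ) * Complex.I) ≠ 0 := by
  intro heq
  apply h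
  have hns : a ^ 2 + u ^ 2 * b ^ 2 = Complex.normSq ((a : ℂ) + (u : ℂ) * (b : ℂ) * Complex.I) := by
    simp [Complex.normSq_apply]
    ring
  rw [hns, heq, map_zero]

set_option maxHeartbeats 1600000 in
theorem h0_closed_form (u t : ℝ) (hu : u ∈ Set.Ioo (-1 : ℝ) 1)
    (hden : Real.cos (t / (2 * Real.pi)) ^ 2
        + u ^ 2 * Real.sin (t / (2 * Real.pi)) ^ 2 ≠ 0) :
    (h0 t u : ℂ)
      = Complex.I / (4 * Real.pi) *
          (Complex.tanh ((artanhR u : ℂ) + Complex.I * t / (2 * Real.pi)) -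
            Complex.tanh ((artanhR u : ℂ) - Complex.I * t / (2 * Real.pi))) -
        (Hc 2 u * t + Hc 4 u * t ^ 3 / (Nat.factorial 3 : ℂ) +
          Hc 6 u * t ^ 5 / (Nat.factorial 5 : ℂ) +
          Hc 8 u * t ^ 7 / (Nat.factorial 7 : ℂ)) := by
  have hπ : (Real.pi : ℝ) ≠ 0 := Real.pi_ne_zero
  have hπC : ((Real.pi : ℝ) : ℂ) ≠ 0 := by exact_mod_cast hπ
  set ξ : ℝ := artanhR u with hξ
  set θ : ℝ := t / (2 * Real.pi) with hθ
  set ca : ℝ := Real.cos θ with hca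
  set sa : ℝ := Real.sin θ with hsa
  set c : ℝ := Real.cosh ξ with hcdef
  set s : ℝ := Real.sinh ξ with hsdef
  have hs : s = u * c := sinh_artanhR u hu
  have hc : c ≠ 0 := ne_of_gt (Real.cosh_pos ξ)
  have hcC : (c : ℂ) ≠ 0 := by exact_mod_cast hc
  have hdenC : ((ca : ℝ) : ℂ) ^ 2 + (u:ℂ) ^ 2 * ((sa : ℝ):ℂ) ^ 2 ≠ 0 := by
    exact_mod_cast hden
  have hB : ((ca : ℝ) : ℂ) + (u:ℂ) * (sa : ℝ) * Complex.I ≠ 0 := nzC u _ _ hden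
  have hB' : ((ca : ℝ) : ℂ) - (u:ℂ) * (sa : ℝ) * Complex.I ≠ 0 := by
    have h2 := nzC u ca (-sa) (by rw [neg_sq]; exact hden)
    rw [Complex.ofReal_neg] at h2
    intro h
    exact h2 (by linear_combination h)
  have hθC : ((θ:ℝ):ℂ) = (t:ℂ) / (2 * (Real.pi:ℂ)) := by
    rw [hθ]; push_cast; ring
  have harg1 : (ξ : ℂ) + Complex.I * t / (2 * Real.pi) = (ξ:ℂ) + (θ:ℝ) * Complex.I := by
    rw [hθC]; ring
  have harg2 : (ξ : ℂ) - Complex.I * t / (2 * Real.pi) = (ξ:ℂ) - (θ:ℝ) * Complex.I := by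
    rw [hθC]; ring
  have ht1 : Complex.tanh ((ξ:ℂ) + (θ:ℝ) * Complex.I)
      = ((u:ℂ) * (ca:ℝ) + (sa:ℝ) * Complex.I) / ((ca:ℝ) + (u:ℂ) * (sa:ℝ) * Complex.I) := by
    rw [Complex.tanh_eq_sinh_div_cosh, Complex.sinh_add, Complex.cosh_add,
      Complex.sinh_mul_I, Complex.cosh_mul_I, ← Complex.ofReal_sinh, ← Complex.ofReal_cosh,
      ← Complex.ofReal_sin, ← Complex.ofReal_cos, ← hca, ← hsa, ← hcdef, ← hsdef]
    have hd : ((c:ℂ)) * ((ca:ℝ) + (u:ℂ) * (sa:ℝ) * Complex.I) ≠ 0 := mul_ne_zero hcC hB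
    rw [div_eq_div_iff (by
        intro h
        apply hd
        rw [← h]
        rw [hs]; push_cast; ring) hB]
    rw [hs]; push_cast; ring
  have ht2 : Complex.tanh ((ξ:ℂ) - (θ:ℝ) * Complex.I)
      = ((u:ℂ) * (ca:ℝ) - (sa:ℝ) * Complex.I) / ((ca:ℝ) - (u:ℂ) * (sa:ℝ) * Complex.I) := by
    rw [Complex.tanh_eq_sinh_div_cosh, Complex.sinh_sub, Complex.cosh_sub,
      Complex.sinh_mul_I, Complex.cosh_mul_I, ← Complex.ofReal_sinh, ← Complex.ofReal_cosh,
      ← Complex.ofReal_sin, ← Complex.ofReal_cos, ← hca, ← hsa, ← hcdef, ← hsdef]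
    have hd : ((c:ℂ)) * ((ca:ℝ) - (u:ℂ) * (sa:ℝ) * Complex.I) ≠ 0 := mul_ne_zero hcC hB'
    rw [div_eq_div_iff (by
        intro h
        apply hd
        rw [← h]
        rw [hs]; push_cast; ring) hB']
    rw [hs]; push_cast; ring
  rw [harg1, harg2, ht1, ht2]
  have hI4 : Complex.I ^ 4 = 1 := by
    rw [show (4:ℕ) = 2*2 from rfl, pow_mul, Complex.I_sq]; ring
  have hI6 : Complex.I ^ 6 = -1 := by
    rw [show (6:ℕ) = 2+4 from rfl, pow_add, Complex.I_sq, hI4]; ring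
  have hI8 : Complex.I ^ 8 = 1 := by
    rw [show (8:ℕ) = 4+4 from rfl, pow_add, hI4]; ring
  have hH2 : Hc 2 u = -(((tau 2).eval u : ℝ) / (4 * (Real.pi:ℂ) ^ 2)) := by
    unfold Hc
    rw [div_pow, Complex.I_sq]
    norm_num [Nat.factorial]
    ring
  have hH4 : Hc 4 u = 6 * (((tau 4).eval u : ℝ) / (16 * (Real.pi:ℂ) ^ 4)) := by
    unfold Hc
    rw [div_pow, hI4]
    norm_num [Nat.factorial]
    ring
  have hH6 : Hc 6 u = -(120 * (((tau 6).eval u : ℝ) / (64 * (Real.pi:ℂ) ^ 6))) := by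
    unfold Hc
    rw [div_pow, hI6]
    norm_num [Nat.factorial]
    ring
  have hH8 : Hc 8 u = 5040 * (((tau 8).eval u : ℝ) / (256 * (Real.pi:ℂ) ^ 8)) := by
    unfold Hc
    rw [div_pow, hI8]
    norm_num [Nat.factorial]
    ring
  rw [hH2, hH4, hH6, hH8]
  simp only [h0]
  rw [← hθ, ← hca, ← hsa]
  rw [div_sub_div _ _ hB hB']
  have hnum : ((u:ℂ) * (ca:ℝ) + (sa:ℝ) * Complex.I) * ((ca:ℝ) - (u:ℂ) * (sa:ℝ) * Complex.I) -
      (((ca:ℝ):ℂ) + (u:ℂ) * (sa:ℝ) * Complex.I) * ((u:ℂ) * (ca:ℝ) - (sa:ℝ) * Complex.I)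
      = 2 * (1 - (u:ℂ)^2) * (sa:ℝ) * (ca:ℝ) * Complex.I := by
    ring
  have hBB : (((ca:ℝ):ℂ) + (u:ℂ) * (sa:ℝ) * Complex.I) * (((ca:ℝ):ℂ) - (u:ℂ) * (sa:ℝ) * Complex.I)
      = ((ca:ℝ):ℂ)^2 + (u:ℂ)^2 * ((sa:ℝ):ℂ)^2 := by
    linear_combination (-((u:ℂ)^2 * ((sa:ℝ):ℂ)^2)) * Complex.I_sq
  rw [hnum, hBB]
  have hstep : Complex.I / (4*(Real.pi:ℂ)) *
      (2*(1-(u:ℂ)^2)*((sa:ℝ):ℂ)*((ca:ℝ):ℂ) * Complex.I /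
        (((ca:ℝ):ℂ)^2+(u:ℂ)^2*((sa:ℝ):ℂ)^2))
      = ((-(1/(2*Real.pi)) * ((1-u^2)*sa*ca) / (ca^2+u^2*sa^2) : ℝ) : ℂ) := by
    push_cast
    field_simp
    linear_combination ((-((u:ℂ)^2*((sa:ℝ):ℂ)*((ca:ℝ):ℂ)^3) + (u:ℂ)^2*((sa:ℝ):ℂ)^3*((ca:ℝ):ℂ)
      - (u:ℂ)^4*((sa:ℝ):ℂ)^3*((ca:ℝ):ℂ) + ((sa:ℝ):ℂ)*((ca:ℝ):ℂ)^3) * (4*((Real.pi:ℝ):ℂ))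
      + (-4*(u:ℂ)^2*(sa:ℂ)*(ca:ℂ) + 4*(Real.pi:ℂ)*(u:ℂ)^2*(sa:ℂ)*(ca:ℂ)^3
        - 4*(Real.pi:ℂ)*(u:ℂ)^2*(sa:ℂ)^3*(ca:ℂ) + 4*(Real.pi:ℂ)*(u:ℂ)^4*(sa:ℂ)^3*(ca:ℂ)
        + 4*(sa:ℂ)*(ca:ℂ) - 4*(Real.pi:ℂ)*(sa:ℂ)*(ca:ℂ)^3))
      * Complex.I_sq
  rw [hstep]
  rw [show ((Nat.factorial 3 : ℕ) : ℂ) = ((6:ℝ):ℂ) by norm_num [Nat.factorial],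
      show ((Nat.factorial 5 : ℕ) : ℂ) = ((120:ℝ):ℂ) by norm_num [Nat.factorial],
      show ((Nat.factorial 7 : ℕ) : ℂ) = ((5040:ℝ):ℂ) by norm_num [Nat.factorial]]
  norm_cast
  field_simp
  ring
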